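/- arXiv:2303.06208 — 5 statements merged into one kernel-verified Lean document; each statement's English description precedes it below -/
import Mathlib

section
/- Let n, l be natural numbers. The vectors e_P, indexed by the set partitions P of Fin l into at most n nonempty blocks, form a basis of the Σ_n-invariant subspace of the space of functions (Fin l → Fin n) → ℝ, where e_P is the indicator function of the set of tuples whose kernel partition equals P. -/
open scoped Classical

/-- The kernel partition `Π(i)` of a tuple `i : Fin l → Fin n`: the set partition of
`Fin l` into the nonempty fibers of `i`. -/
def kernelPartition {n l : ℕ} (i : Fin l → Fin n) : Set (Set (Fin l)) :=
  {S | S.Nonempty ∧ ∃ j : Fin n, S = i ⁻¹' {j}}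

/-- The `Σ_n`-invariant subspace of `(Fin l → Fin n) → ℝ ≅ (ℝ^n)^{⊗ l}`:
functions `f` with `f (σ ∘ i) = f i` for every permutation `σ` of `Fin n`. -/
def invariantFunctions (n l : ℕ) : Submodule ℝ ((Fin l → Fin n) → ℝ) where
  carrier := {f | ∀ (σ : Equiv.Perm (Fin n)) (i : Fin l → Fin n), f (σ ∘ i) = f i}
  add_mem' := by
    intro f g hf hg σ i
    simp only [Pi.add_apply, hf σ i, hg σ i]
  zero_mem' := by intro σ i; rfl
  smul_mem' := by
    intro c f hf σ i
    simp only [Pi.smul_apply, hf σ i]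

namespace OrbitAux

variable {n l : ℕ}

lemma fiber_comp (σ : Equiv.Perm (Fin n)) (i : Fin l → Fin n) (j : Fin n) :
    (σ ∘ i) ⁻¹' {j} = i ⁻¹' {σ⁻¹ j} := by
  ext a
  simp [Set.mem_preimage, Equiv.Perm.eq_inv_iff_eq, eq_comm]
  rw [Equiv.eq_symm_apply, eq_comm]

lemma kernelPartition_comp (σ : Equiv.Perm (Fin n)) (i : Fin l → Fin n) :
    kernelPartition (σ ∘ i) = kernelPartition i := by
  ext S
  constructor
  · rintro ⟨hne, j, rfl⟩
    exact ⟨hne, σ⁻¹ j, fiber_comp σ i j⟩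
  · rintro ⟨hne, j, rfl⟩
    refine ⟨hne, σ j, ?_⟩
    rw [fiber_comp, Equiv.Perm.inv_def, Equiv.symm_apply_apply]

lemma mem_kernelPartition_self (i : Fin l → Fin n) (a : Fin l) :
    i ⁻¹' {i a} ∈ kernelPartition i := ⟨⟨a, rfl⟩, i a, rfl⟩

lemma kernelPartition_isPartition (i : Fin l → Fin n) :
    Setoid.IsPartition (kernelPartition i) := by
  constructor
  · rintro ⟨hne, -⟩
    exact Set.not_nonempty_empty hne
  · intro a
    refine ⟨i ⁻¹' {i a}, ⟨mem_kernelPartition_self i a, rfl⟩, ?_⟩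
    rintro S ⟨⟨-, j, rfl⟩, ha⟩
    simp only [Set.mem_preimage, Set.mem_singleton_iff] at ha
    rw [ha]

lemma kernelPartition_ncard_le (i : Fin l → Fin n) :
    (kernelPartition i).ncard ≤ n := by
  have hsub : kernelPartition i ⊆ Set.range (fun j : Fin n => i ⁻¹' {j}) := by
    rintro S ⟨-, j, rfl⟩
    exact ⟨j, rfl⟩
  calc (kernelPartition i).ncard ≤ (Set.range (fun j : Fin n => i ⁻¹' {j})).ncard :=
        Set.ncard_le_ncard hsub (Set.finite_range _)
    _ = ((fun j : Fin n => i ⁻¹' {j}) '' Set.univ).ncard := by rw [Set.image_univ]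
    _ ≤ (Set.univ : Set (Fin n)).ncard := Set.ncard_image_le Set.finite_univ
    _ = n := by simp [Set.ncard_univ]

lemma exists_tuple (P : Set (Set (Fin l))) (hP : Setoid.IsPartition P)
    (hn : P.ncard ≤ n) : ∃ i : Fin l → Fin n, kernelPartition i = P := by
  have hfin : P.Finite := Set.toFinite P
  have hcard : Fintype.card ↑P ≤ Fintype.card (Fin n) := by
    rw [Fintype.card_fin, ← Nat.card_eq_fintype_card, Nat.card_coe_set_eq]
    exact hn
  obtain ⟨g⟩ := Function.Embedding.nonempty_of_card_le hcard
  -- block of a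
  have hbl : ∀ a : Fin l, ∃ S : ↑P, a ∈ (S : Set (Fin l)) := by
    intro a
    obtain ⟨S, ⟨hSP, haS⟩, -⟩ := hP.2 a
    exact ⟨⟨S, hSP⟩, haS⟩
  choose bl hbl using hbl
  have hbl_unique : ∀ (a : Fin l) (S : ↑P), a ∈ (S : Set (Fin l)) → bl a = S := by
    intro a S haS
    obtain ⟨T, -, hT⟩ := hP.2 a
    have h1 := hT (bl a) ⟨(bl a).2, hbl a⟩
    have h2 := hT (S : Set (Fin l)) ⟨S.2, haS⟩
    exact Subtype.ext (h1.trans h2.symm)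
  refine ⟨fun a => g (bl a), ?_⟩
  have key : ∀ S : ↑P, (fun a => g (bl a)) ⁻¹' {g S} = (S : Set (Fin l)) := by
    intro S
    ext a
    simp only [Set.mem_preimage, Set.mem_singleton_iff]
    constructor
    · intro h
      have := g.injective h
      rw [← this]
      exact hbl a
    · intro h
      rw [hbl_unique a S h]
  ext S
  constructor
  · rintro ⟨hne, j, rfl⟩
    obtain ⟨a, ha⟩ := hne
    simp only [Set.mem_preimage, Set.mem_singleton_iff] at ha
    rw [← ha, key (bl a)]
    exact (bl a).2
  · intro hSP
    refine ⟨?_, g ⟨S, hSP⟩, (key ⟨S, hSP⟩).symm⟩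
    rw [Set.nonempty_iff_ne_empty]
    rintro rfl
    exact hP.1 hSP

lemma exists_perm (i i' : Fin l → Fin n)
    (h : kernelPartition i = kernelPartition i') :
    ∃ σ : Equiv.Perm (Fin n), i' = σ ∘ i := by
  have hfib : ∀ j : Fin n, j ∈ Set.range i → ∃ j', i ⁻¹' {j} = i' ⁻¹' {j'} := by
    rintro j ⟨a, rfl⟩
    have : i ⁻¹' {i a} ∈ kernelPartition i' := h ▸ mem_kernelPartition_self i a
    obtain ⟨-, j', hj'⟩ := this
    exact ⟨j', hj'⟩
  have hfib' : ∀ j' : Fin n, j' ∈ Set.range i' → ∃ j, j ∈ Set.range i ∧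
      i ⁻¹' {j} = i' ⁻¹' {j'} := by
    rintro j' ⟨a, rfl⟩
    have : i' ⁻¹' {i' a} ∈ kernelPartition i := h.symm ▸ mem_kernelPartition_self i' a
    obtain ⟨hne, j, hj⟩ := this
    obtain ⟨b, hb⟩ := hne
    simp only [hj, Set.mem_preimage, Set.mem_singleton_iff] at hb
    exact ⟨j, ⟨b, hb⟩, hj.symm⟩
  choose τ hτ using hfib
  -- τ lands in range i'
  have hmem : ∀ (j : Fin n) (hj : j ∈ Set.range i), τ j hj ∈ Set.range i' := by
    rintro j ⟨a, rfl⟩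
    have : a ∈ i' ⁻¹' {τ (i a) ⟨a, rfl⟩} := by
      rw [← hτ (i a) ⟨a, rfl⟩]; exact rfl
    exact ⟨a, this⟩
  set f : {j // j ∈ Set.range i} → {j // j ∈ Set.range i'} :=
    fun j => ⟨τ j.1 j.2, hmem j.1 j.2⟩ with hf
  have hbij : Function.Bijective f := by
    constructor
    · rintro ⟨j1, hj1⟩ ⟨j2, hj2⟩ hEq
      have hEq' : τ j1 hj1 = τ j2 hj2 := congrArg Subtype.val hEq
      obtain ⟨a, rfl⟩ := hj1
      have ha : a ∈ i ⁻¹' {j2} := by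
        have : a ∈ i' ⁻¹' {τ j2 hj2} := by
          rw [← hEq', ← hτ (i a) ⟨a, rfl⟩]; exact rfl
        rw [hτ j2 hj2]; exact this
      exact Subtype.ext ha
    · rintro ⟨j', hj'⟩
      obtain ⟨j, hj, hEq⟩ := hfib' j' hj'
      refine ⟨⟨j, hj⟩, Subtype.ext ?_⟩
      -- τ j hj = j'
      have h1 : i ⁻¹' {j} = i' ⁻¹' {τ j hj} := hτ j hj
      obtain ⟨a, ha⟩ := id hj
      have ha1 : a ∈ i ⁻¹' {j} := by simp [ha]
      have h2 : i' a = τ j hj := by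
        have := h1 ▸ ha1; simpa using this
      have h3 : i' a = j' := by
        have := hEq ▸ ha1
        simpa using this
      exact h2.symm.trans h3
  set e := Equiv.ofBijective f hbij
  refine ⟨e.extendSubtype, ?_⟩
  funext a
  have hmem' : i a ∈ Set.range i := ⟨a, rfl⟩
  have : e.extendSubtype (i a) = (e ⟨i a, hmem'⟩ : Fin n) :=
    Equiv.extendSubtype_apply_of_mem e (i a) hmem'
  simp only [Function.comp_apply, this]
  show i' a = τ (i a) hmem'
  have : a ∈ i' ⁻¹' {τ (i a) hmem'} := by
    rw [← hτ (i a) hmem']; exact rfl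
  exact this

noncomputable def eP (n l : ℕ)
    (P : {P : Set (Set (Fin l)) // Setoid.IsPartition P ∧ P.ncard ≤ n}) :
    invariantFunctions n l :=
  ⟨fun i => if kernelPartition i = P.1 then 1 else 0, by
    intro σ i
    simp only [kernelPartition_comp]⟩

noncomputable def rep (n l : ℕ)
    (P : {P : Set (Set (Fin l)) // Setoid.IsPartition P ∧ P.ncard ≤ n}) :
    Fin l → Fin n :=
  Classical.choose (exists_tuple P.1 P.2.1 P.2.2)

lemma rep_spec (n l : ℕ)
    (P : {P : Set (Set (Fin l)) // Setoid.IsPartition P ∧ P.ncard ≤ n}) :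
    kernelPartition (rep n l P) = P.1 :=
  Classical.choose_spec (exists_tuple P.1 P.2.1 P.2.2)

end OrbitAux


open OrbitAux in
/-- The orbit-sum vectors `e_P`, indexed by set partitions `P` of `Fin l` into at most
`n` nonempty blocks (where `e_P` is the indicator of the tuples with kernel partition `P`),
form a basis of the `Σ_n`-invariant subspace. -/
theorem orbit_sum_basis (n l : ℕ) :
    ∃ b : Module.Basis {P : Set (Set (Fin l)) // Setoid.IsPartition P ∧ P.ncard ≤ n} ℝ
        (invariantFunctions n l),
      ∀ P, (↑(b P) : (Fin l → Fin n) → ℝ) =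
        fun i => if kernelPartition i = P.1 then 1 else 0 := by
  set Idx := {P : Set (Set (Fin l)) // Setoid.IsPartition P ∧ P.ncard ≤ n}
  have hval : ∀ (P Q : Idx), (↑(eP n l Q) : (Fin l → Fin n) → ℝ) (rep n l P)
      = if Q = P then 1 else 0 := by
    intro P Q
    show (if kernelPartition (rep n l P) = Q.1 then (1:ℝ) else 0) = _
    rw [rep_spec]
    by_cases h : Q = P
    · simp [h]
    · rw [if_neg (fun hh => h (Subtype.ext hh.symm)), if_neg h]
  have hli : LinearIndependent ℝ (eP n l) := by
    rw [Fintype.linearIndependent_iff]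
    intro g hg P
    have := congrArg (fun v : invariantFunctions n l => (↑v : (Fin l → Fin n) → ℝ) (rep n l P)) hg
    simp only [AddSubmonoidClass.coe_finset_sum, Finset.sum_apply] at this
    rw [show ((0 : invariantFunctions n l) : (Fin l → Fin n) → ℝ) (rep n l P) = 0 from rfl] at this
    rw [← this]
    rw [Finset.sum_eq_single P]
    · simp [hval P P]
    · intro Q _ hQ
      simp only [SetLike.val_smul, Pi.smul_apply, smul_eq_mul]
      rw [hval P Q, if_neg hQ, mul_zero]
    · intro h
      exact absurd (Finset.mem_univ P) h
  have hspan : ⊤ ≤ Submodule.span ℝ (Set.range (eP n l)) := by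
    rintro ⟨f, hf⟩ -
    have hrep : (⟨f, hf⟩ : invariantFunctions n l)
        = ∑ P : Idx, f (rep n l P) • eP n l P := by
      apply Subtype.ext
      simp only [AddSubmonoidClass.coe_finset_sum]
      funext i
      have hPi : Setoid.IsPartition (kernelPartition i) ∧ (kernelPartition i).ncard ≤ n :=
        ⟨kernelPartition_isPartition i, kernelPartition_ncard_le i⟩
      set P0 : Idx := ⟨kernelPartition i, hPi⟩
      rw [Finset.sum_apply]
      rw [Finset.sum_eq_single P0]
      · show f i = (f (rep n l P0) • (eP n l P0 : invariantFunctions n l).1) i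
        obtain ⟨σ, hσ⟩ := exists_perm (rep n l P0) i (by rw [rep_spec])
        have : f i = f (rep n l P0) := by rw [hσ]; exact hf σ (rep n l P0)
        simp only [SetLike.val_smul, Pi.smul_apply, smul_eq_mul]
        show f i = f (rep n l P0) * (if kernelPartition i = P0.1 then 1 else 0)
        rw [if_pos rfl, mul_one, this]
      · intro Q _ hQ
        simp only [SetLike.val_smul, Pi.smul_apply, smul_eq_mul]
        show f (rep n l Q) * (if kernelPartition i = Q.1 then 1 else 0) = 0
        rw [if_neg (fun hh => hQ (Subtype.ext (by rw [← hh]))), mul_zero]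
      · intro h
        exact absurd (Finset.mem_univ P0) h
    rw [hrep]
    exact Submodule.sum_mem _ fun P _ =>
      Submodule.smul_mem _ _ (Submodule.subset_span ⟨P, rfl⟩)
  refine ⟨Module.Basis.mk hli hspan, fun P => ?_⟩
  rw [Module.Basis.mk_apply]
  rfl
end

section
/- Let n, l be natural numbers. The vectors d_P, indexed by the set partitions P of Fin l into at most n nonempty blocks, form a basis of the Σ_n-invariant subspace of the space of functions (Fin l → Fin n) → ℝ, where d_P is the indicator function of the set of tuples that are constant on every block of P. -/
open scoped Classical

/-- `i` is constant on every block of the set partition `P`. -/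
def constOnBlocks {n l : ℕ} (P : Set (Set (Fin l))) (i : Fin l → Fin n) : Prop :=
  ∀ S ∈ P, ∀ k ∈ S, ∀ k' ∈ S, i k = i k'

namespace DBA
variable {n l : ℕ}

/-- Set partitions of `Fin l` into at most `n` blocks. -/
abbrev PartLE (n l : ℕ) := {P : Set (Set (Fin l)) // Setoid.IsPartition P ∧ P.ncard ≤ n}

/-- The partition of `Fin l` into the nonempty fibers of `i`. -/
def fiberPart (i : Fin l → Fin n) : Set (Set (Fin l)) :=
  {S | (∃ c : Fin n, S = i ⁻¹' {c}) ∧ S.Nonempty}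

lemma fiberPart_isPartition (i : Fin l → Fin n) : Setoid.IsPartition (fiberPart i) := by
  constructor
  · rintro ⟨-, hne⟩
    exact hne.ne_empty rfl
  · intro k
    refine ⟨i ⁻¹' {i k}, ⟨⟨⟨i k, rfl⟩, ⟨k, rfl⟩⟩, rfl⟩, ?_⟩
    rintro S ⟨⟨⟨c, rfl⟩, -⟩, hk⟩
    simp only [Set.mem_preimage, Set.mem_singleton_iff] at hk
    rw [hk]

lemma fiberPart_ncard_le (i : Fin l → Fin n) : (fiberPart i).ncard ≤ n := by
  have hsub : fiberPart i ⊆ (fun c : Fin n => i ⁻¹' {c}) '' Set.univ := by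
    rintro S ⟨⟨c, rfl⟩, -⟩
    exact ⟨c, trivial, rfl⟩
  calc (fiberPart i).ncard ≤ ((fun c : Fin n => i ⁻¹' {c}) '' Set.univ).ncard :=
        Set.ncard_le_ncard hsub (Set.toFinite _)
    _ ≤ (Set.univ : Set (Fin n)).ncard := Set.ncard_image_le (Set.toFinite _)
    _ = n := by simp [Set.ncard_univ]

lemma fiberPart_comp (σ : Equiv.Perm (Fin n)) (i : Fin l → Fin n) :
    fiberPart (σ ∘ i) = fiberPart i := by
  ext S
  constructor
  · rintro ⟨⟨c, rfl⟩, hne⟩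
    exact ⟨⟨σ⁻¹ c, by ext k; simp [Equiv.apply_eq_iff_eq_symm_apply, Equiv.Perm.inv_def]⟩, hne⟩
  · rintro ⟨⟨c, rfl⟩, hne⟩
    exact ⟨⟨σ c, by ext k; simp⟩, hne⟩

lemma exists_rep {P : Set (Set (Fin l))} (hP : Setoid.IsPartition P) (hn : P.ncard ≤ n) :
    ∃ i : Fin l → Fin n, fiberPart i = P := by
  haveI : Fintype P := Fintype.ofFinite _
  have hcard : Fintype.card P ≤ Fintype.card (Fin n) := by
    rw [← Nat.card_eq_fintype_card, Nat.card_coe_set_eq]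
    simpa using hn
  obtain ⟨φ⟩ := Function.Embedding.nonempty_of_card_le hcard
  choose B hB huniq using hP.2
  refine ⟨fun k => φ ⟨B k, (hB k).1⟩, ?_⟩
  have claimA : ∀ (S : Set (Fin l)) (hS : S ∈ P) (k : Fin l),
      φ ⟨B k, (hB k).1⟩ = φ ⟨S, hS⟩ ↔ k ∈ S := by
    intro S hS k
    constructor
    · intro h
      have := φ.injective h
      have hBk : B k = S := congrArg Subtype.val this
      rw [← hBk]; exact (hB k).2
    · intro hk
      have : S = B k := huniq k S ⟨hS, hk⟩
      congr 1
      exact Subtype.ext this.symm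
  have claimB : ∀ (S : Set (Fin l)) (hS : S ∈ P),
      S = (fun k => φ ⟨B k, (hB k).1⟩) ⁻¹' {φ ⟨S, hS⟩} := by
    intro S hS
    ext k
    simp only [Set.mem_preimage, Set.mem_singleton_iff]
    exact (claimA S hS k).symm
  ext S
  constructor
  · rintro ⟨⟨c, rfl⟩, ⟨k, hk⟩⟩
    simp only [Set.mem_preimage, Set.mem_singleton_iff] at hk
    have : (fun k => φ ⟨B k, (hB k).1⟩) ⁻¹' {c} = B k := by
      rw [← hk]
      exact (claimB (B k) (hB k).1).symm
    rw [this]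
    exact (hB k).1
  · intro hS
    refine ⟨⟨φ ⟨S, hS⟩, claimB S hS⟩, ?_⟩
    rcases Setoid.nonempty_of_mem_partition hP hS with ⟨k, hk⟩
    exact ⟨k, hk⟩

lemma exists_perm_of_fiberPart_eq {i j : Fin l → Fin n} (h : fiberPart i = fiberPart j) :
    ∃ σ : Equiv.Perm (Fin n), j = σ ∘ i := by
  have eqf : ∀ k, i ⁻¹' {i k} = j ⁻¹' {j k} := by
    intro k
    have hmem : i ⁻¹' {i k} ∈ fiberPart i := ⟨⟨i k, rfl⟩, ⟨k, rfl⟩⟩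
    rw [h] at hmem
    obtain ⟨⟨c, hc⟩, -⟩ := hmem
    have hk : k ∈ j ⁻¹' {c} := by rw [← hc]; exact rfl
    simp only [Set.mem_preimage, Set.mem_singleton_iff] at hk
    rw [hc, hk]
  have key : ∀ k k', i k = i k' ↔ j k = j k' := by
    intro k k'
    constructor
    · intro hkk
      have : k' ∈ i ⁻¹' {i k} := by simp [hkk.symm]
      rw [eqf k] at this
      simpa using this.symm
    · intro hkk
      have : k' ∈ j ⁻¹' {j k} := by simp [hkk.symm]
      rw [← eqf k] at this
      simpa using this.symm
  have mem_i : ∀ x : Set.range i, i (x.2.choose) = x.1 := fun x => x.2.choose_spec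
  have mem_j : ∀ x : Set.range j, j (x.2.choose) = x.1 := fun x => x.2.choose_spec
  let f : Set.range i → Set.range j := fun x => ⟨j x.2.choose, Set.mem_range_self _⟩
  let g : Set.range j → Set.range i := fun x => ⟨i x.2.choose, Set.mem_range_self _⟩
  have hfg : ∀ x, g (f x) = x := by
    intro x
    apply Subtype.ext
    show i ((f x).2.choose) = x.1
    have h1 : j ((f x).2.choose) = (f x).1 := mem_j (f x)
    have h3 : i ((f x).2.choose) = i (x.2.choose) := (key _ _).2 h1
    rw [h3, mem_i]
  have hgf : ∀ x, f (g x) = x := by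
    intro x
    apply Subtype.ext
    show j ((g x).2.choose) = x.1
    have h1 : i ((g x).2.choose) = (g x).1 := mem_i (g x)
    have h3 : j ((g x).2.choose) = j (x.2.choose) := (key _ _).1 h1
    rw [h3, mem_j]
  let e : Set.range i ≃ Set.range j := ⟨f, g, hfg, hgf⟩
  refine ⟨e.extendSubtype, funext fun k => ?_⟩
  have hm : i k ∈ Set.range i := Set.mem_range_self k
  have := e.extendSubtype_apply_of_mem (i k) hm
  show j k = e.extendSubtype (i k)
  rw [this]
  show j k = j ((⟨i k, hm⟩ : Set.range i).2.choose)
  exact ((key _ _).1 (mem_i ⟨i k, hm⟩)).symm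

/-- `P` refines `Q`: every block of `P` is contained in a block of `Q`. -/
def Refines (P Q : Set (Set (Fin l))) : Prop := ∀ S ∈ P, ∃ T ∈ Q, S ⊆ T

lemma refines_refl (P : Set (Set (Fin l))) : Refines P P :=
  fun S hS => ⟨S, hS, subset_rfl⟩

lemma constOnBlocks_iff {P : Set (Set (Fin l))} (hP : Setoid.IsPartition P)
    (i : Fin l → Fin n) : constOnBlocks P i ↔ Refines P (fiberPart i) := by
  constructor
  · intro hc S hS
    obtain ⟨k₀, hk₀⟩ := Setoid.nonempty_of_mem_partition hP hS
    refine ⟨i ⁻¹' {i k₀}, ⟨⟨i k₀, rfl⟩, ⟨k₀, rfl⟩⟩, ?_⟩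
    intro k hk
    simp only [Set.mem_preimage, Set.mem_singleton_iff]
    exact hc S hS k hk k₀ hk₀
  · rintro hr S hS k hk k' hk'
    obtain ⟨T, ⟨⟨c, rfl⟩, -⟩, hST⟩ := hr S hS
    have h1 := hST hk
    have h2 := hST hk'
    simp only [Set.mem_preimage, Set.mem_singleton_iff] at h1 h2
    rw [h1, h2]

lemma block_eq {P : Set (Set (Fin l))} (hP : Setoid.IsPartition P) {S S' : Set (Fin l)}
    (hS : S ∈ P) (hS' : S' ∈ P) {k : Fin l} (hk : k ∈ S) (hk' : k ∈ S') : S = S' := by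
  obtain ⟨b, -, hun⟩ := hP.2 k
  rw [hun S ⟨hS, hk⟩, hun S' ⟨hS', hk'⟩]

lemma refines_eq {P Q : Set (Set (Fin l))} (hP : Setoid.IsPartition P)
    (hQ : Setoid.IsPartition Q) (hPQ : Refines P Q) (hcard : P.ncard ≤ Q.ncard) : P = Q := by
  haveI : Fintype P := Fintype.ofFinite _
  haveI : Fintype Q := Fintype.ofFinite _
  choose T hT hsub using hPQ
  let F : P → Q := fun S => ⟨T S.1 S.2, hT S.1 S.2⟩
  have hFsub : ∀ S : P, S.1 ⊆ (F S).1 := fun S => hsub S.1 S.2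
  have hFsurj : Function.Surjective F := by
    rintro ⟨U, hU⟩
    obtain ⟨k, hk⟩ := Setoid.nonempty_of_mem_partition hQ hU
    obtain ⟨S, ⟨hS, hkS⟩, -⟩ := hP.2 k
    refine ⟨⟨S, hS⟩, ?_⟩
    apply Subtype.ext
    exact block_eq hQ (hT S hS) hU (hsub S hS hkS) hk
  have hcards : Fintype.card Q ≤ Fintype.card P := Fintype.card_le_of_surjective F hFsurj
  have hcard' : Fintype.card P ≤ Fintype.card Q := by
    rw [← Nat.card_eq_fintype_card, ← Nat.card_eq_fintype_card,
      Nat.card_coe_set_eq, Nat.card_coe_set_eq]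
    exact hcard
  have hFbij : Function.Bijective F :=
    (Fintype.bijective_iff_surjective_and_card F).2 ⟨hFsurj, le_antisymm hcard' hcards⟩
  have hQP : Q ⊆ P := by
    intro U hU
    obtain ⟨S, hFS⟩ := hFsurj ⟨U, hU⟩
    have hFSU : (F S).1 = U := congrArg Subtype.val hFS
    have hSU : S.1 ⊆ U := by rw [← hFSU]; exact hFsub S
    have hUS : U ⊆ S.1 := by
      intro k hk
      obtain ⟨S', ⟨hS', hkS'⟩, -⟩ := hP.2 k
      have h1 : F ⟨S', hS'⟩ = ⟨U, hU⟩ := by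
        apply Subtype.ext
        exact block_eq hQ (hT S' hS') hU (hsub S' hS' hkS') hk
      have h2 : (⟨S', hS'⟩ : P) = S := hFbij.1 (h1.trans hFS.symm)
      have h3 : S' = S.1 := congrArg Subtype.val h2
      rw [← h3]
      exact hkS'
    have : S.1 = U := le_antisymm hSU hUS
    rw [← this]; exact S.2
  exact (Set.eq_of_subset_of_ncard_le hQP hcard (Set.toFinite P)).symm

noncomputable def toPart (i : Fin l → Fin n) : PartLE n l :=
  ⟨fiberPart i, fiberPart_isPartition i, fiberPart_ncard_le i⟩

noncomputable def rep (P : PartLE n l) : Fin l → Fin n :=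
  (exists_rep P.2.1 P.2.2).choose

lemma fiberPart_rep (P : PartLE n l) : fiberPart (rep P) = P.1 :=
  (exists_rep P.2.1 P.2.2).choose_spec

noncomputable def E (n l : ℕ) : invariantFunctions n l ≃ₗ[ℝ] (PartLE n l → ℝ) where
  toFun f := fun P => f.1 (rep P)
  map_add' f g := rfl
  map_smul' c f := rfl
  invFun g := ⟨fun i => g (toPart i), fun σ i => by
    simp only
    congr 1
    apply Subtype.ext
    exact fiberPart_comp σ i⟩
  left_inv f := by
    apply Subtype.ext
    funext i
    show f.1 (rep (toPart i)) = f.1 i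
    obtain ⟨σ, hσ⟩ := exists_perm_of_fiberPart_eq
      (i := i) (j := rep (toPart i)) (fiberPart_rep (toPart i)).symm
    rw [hσ]
    exact f.2 σ i
  right_inv g := by
    funext P
    show g (toPart (rep P)) = g P
    congr 1
    apply Subtype.ext
    exact fiberPart_rep P

noncomputable def zeta (n l : ℕ) : PartLE n l → PartLE n l → ℝ :=
  fun P Q => if Refines P.1 Q.1 then 1 else 0

lemma zeta_li (n l : ℕ) : LinearIndependent ℝ (zeta n l) := by
  haveI : Fintype (PartLE n l) := Fintype.ofFinite _
  rw [Fintype.linearIndependent_iff]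
  intro g hg
  by_contra hne
  push_neg at hne
  obtain ⟨P₀, hP₀⟩ := hne
  set s : Finset (PartLE n l) := Finset.univ.filter (fun P => g P ≠ 0) with hs
  have hsne : s.Nonempty := ⟨P₀, by simp [hs, hP₀]⟩
  obtain ⟨m, hm, hmax⟩ := Finset.exists_max_image s (fun P => P.1.ncard) hsne
  have h0 := congrFun hg m
  rw [Finset.sum_apply] at h0
  simp only [Pi.smul_apply, smul_eq_mul, Pi.zero_apply] at h0
  have hsum : ∑ P : PartLE n l, g P * zeta n l P m = g m := by
    rw [Finset.sum_eq_single m]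
    · simp [zeta, refines_refl]
    · intro P _ hPm
      rcases eq_or_ne (g P) 0 with h | h
      · simp [h]
      · have hPs : P ∈ s := by simp [hs, h]
        by_cases hr : Refines P.1 m.1
        · exact absurd (Subtype.ext (refines_eq P.2.1 m.2.1 hr (hmax P hPs))) hPm
        · simp [zeta, hr]
    · intro h
      exact absurd (Finset.mem_univ m) h
  rw [hsum] at h0
  have : m ∈ s := hm
  rw [hs, Finset.mem_filter] at this
  exact this.2 h0

noncomputable def zetaBasis (n l : ℕ) : Module.Basis (PartLE n l) ℝ (PartLE n l → ℝ) := by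
  haveI : Fintype (PartLE n l) := Fintype.ofFinite _
  exact Module.Basis.mk (zeta_li n l)
    ((zeta_li n l).span_eq_top_of_card_eq_finrank'
      (Module.finrank_fintype_fun_eq_card ℝ).symm).ge

end DBA

/-- The diagram-basis vectors `d_P`, indexed by set partitions `P` of `Fin l` into at most
`n` nonempty blocks (where `d_P` is the indicator of the tuples that are constant on every
block of `P`), form a basis of the `Σ_n`-invariant subspace. -/
theorem diagram_basis (n l : ℕ) :
    ∃ b : Module.Basis {P : Set (Set (Fin l)) // Setoid.IsPartition P ∧ P.ncard ≤ n} ℝ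
        (invariantFunctions n l),
      ∀ P, (↑(b P) : (Fin l → Fin n) → ℝ) =
        fun i => if constOnBlocks P.1 i then 1 else 0 := by
  refine ⟨(DBA.zetaBasis n l).map (DBA.E n l).symm, fun P => ?_⟩
  rw [Module.Basis.map_apply, DBA.zetaBasis, Module.Basis.mk_apply]
  have : ((DBA.E n l).symm (DBA.zeta n l P) : (Fin l → Fin n) → ℝ) =
      fun i => DBA.zeta n l P (DBA.toPart i) := rfl
  rw [this]
  funext i
  exact if_congr (DBA.constOnBlocks_iff P.2.1 i).symm rfl rfl
end

section
/- Let n, m, m' be natural numbers. The vector space of Σ_n-equivariant linear maps from the space of functions (Fin m → Fin n) → ℝ to the space of functions (Fin m' → Fin n) → ℝ (with Σ_n acting on each space by permuting the values of the indexing tuples) is linearly isomorphic to the Σ_n-invariant subspace of the space of functions (Fin (m + m') → Fin n) → ℝ. -/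
/-- The space of `Σ_n`-equivariant linear maps
`((Fin m → Fin n) → ℝ) → ((Fin m' → Fin n) → ℝ)`, where `Σ_n` acts on each space by
`(σ • v) i = v (⇑σ⁻¹ ∘ i)`. -/
noncomputable def equivariantMaps (n m m' : ℕ) :
    Submodule ℝ (((Fin m → Fin n) → ℝ) →ₗ[ℝ] ((Fin m' → Fin n) → ℝ)) where
  carrier := {φ | ∀ (σ : Equiv.Perm (Fin n)) (v : (Fin m → Fin n) → ℝ),
    φ (fun i => v (⇑σ⁻¹ ∘ i)) = fun i => φ v (⇑σ⁻¹ ∘ i)}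
  add_mem' := by
    intro φ ψ hφ hψ σ v
    funext i
    simp only [LinearMap.add_apply, Pi.add_apply, hφ σ v, hψ σ v]
  zero_mem' := by intro σ v; rfl
  smul_mem' := by
    intro c φ hφ σ v
    funext i
    simp only [LinearMap.smul_apply, Pi.smul_apply, hφ σ v]

namespace EqAux

variable {n m m' : ℕ}

noncomputable def delta (a : Fin m → Fin n) : (Fin m → Fin n) → ℝ :=
  fun a' => if a' = a then 1 else 0

def glue (p : Fin m → Fin n) (q : Fin m' → Fin n) : Fin (m + m') → Fin n :=
  Sum.elim p q ∘ ⇑finSumFinEquiv.symm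

def split₁ (c : Fin (m + m') → Fin n) : Fin m → Fin n :=
  fun i => c (finSumFinEquiv (Sum.inl i))

def split₂ (c : Fin (m + m') → Fin n) : Fin m' → Fin n :=
  fun i => c (finSumFinEquiv (Sum.inr i))

lemma glue_split (c : Fin (m + m') → Fin n) : glue (split₁ c) (split₂ c) = c := by
  funext i
  conv_rhs => rw [← finSumFinEquiv.apply_symm_apply i]
  simp only [glue, Function.comp_apply]
  rcases finSumFinEquiv.symm i with x | x <;> rfl

lemma split₁_glue (p : Fin m → Fin n) (q : Fin m' → Fin n) : split₁ (glue p q) = p := by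
  funext i; simp [split₁, glue]

lemma split₂_glue (p : Fin m → Fin n) (q : Fin m' → Fin n) : split₂ (glue p q) = q := by
  funext i; simp [split₂, glue]

lemma comp_glue (σ : Fin n → Fin n) (p : Fin m → Fin n) (q : Fin m' → Fin n) :
    σ ∘ glue p q = glue (σ ∘ p) (σ ∘ q) := by
  funext i
  simp only [glue, Function.comp_apply]
  rcases finSumFinEquiv.symm i with x | x <;> rfl

lemma split₁_comp (σ : Fin n → Fin n) (c : Fin (m + m') → Fin n) :
    split₁ (σ ∘ c) = σ ∘ split₁ c := rfl

lemma split₂_comp (σ : Fin n → Fin n) (c : Fin (m + m') → Fin n) :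
    split₂ (σ ∘ c) = σ ∘ split₂ c := rfl

lemma delta_comp (σ : Equiv.Perm (Fin n)) (a : Fin m → Fin n) :
    delta (⇑σ ∘ a) = fun a' => delta a (⇑σ⁻¹ ∘ a') := by
  funext a'
  have h : (a' = ⇑σ ∘ a) ↔ (⇑σ⁻¹ ∘ a' = a) := by
    constructor
    · intro h; rw [h]; funext i; simp
    · intro h; rw [← h]; funext i; simp
  simp only [delta, h]

lemma sum_delta (v : (Fin m → Fin n) → ℝ) : (∑ a, v a • delta a) = v := by
  funext a'
  simp [delta, Finset.sum_apply]

noncomputable def toMap (f : (Fin (m + m') → Fin n) → ℝ) :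
    ((Fin m → Fin n) → ℝ) →ₗ[ℝ] ((Fin m' → Fin n) → ℝ) where
  toFun v := fun b => ∑ a, v a * f (glue a b)
  map_add' v w := by
    funext b
    simp [add_mul, Finset.sum_add_distrib]
  map_smul' r v := by
    funext b
    simp [Finset.mul_sum, mul_assoc]

end EqAux

namespace EqAux

variable {n m m' : ℕ}

noncomputable def fwd (φ : equivariantMaps n m m') : invariantFunctions n (m + m') :=
  ⟨fun c => φ.1 (delta (split₁ c)) (split₂ c), by
    intro σ c
    show φ.1 (delta (split₁ (⇑σ ∘ c))) (split₂ (⇑σ ∘ c)) = _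
    rw [split₁_comp, split₂_comp, delta_comp, φ.2 σ (delta (split₁ c))]
    show φ.1 (delta (split₁ c)) (⇑σ⁻¹ ∘ (⇑σ ∘ split₂ c)) = _
    have h : ⇑σ⁻¹ ∘ (⇑σ ∘ split₂ c) = split₂ c := by funext i; simp
    rw [h]⟩

noncomputable def bwd (f : invariantFunctions n (m + m')) : equivariantMaps n m m' :=
  ⟨toMap f.1, by
    intro σ v
    funext b
    show (∑ a, v (⇑σ⁻¹ ∘ a) * f.1 (glue a b)) = ∑ a, v a * f.1 (glue a (⇑σ⁻¹ ∘ b))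
    refine Fintype.sum_equiv (Equiv.arrowCongr (Equiv.refl (Fin m)) σ⁻¹) _ _ fun a => ?_
    have he : (Equiv.arrowCongr (Equiv.refl (Fin m)) σ⁻¹) a = ⇑σ⁻¹ ∘ a := by
      funext i; rfl
    rw [he, ← comp_glue, f.2 σ⁻¹ (glue a b)]⟩

noncomputable def mainEquiv : (equivariantMaps n m m') ≃ₗ[ℝ] (invariantFunctions n (m + m')) where
  toFun := fwd
  map_add' φ ψ := by
    apply Subtype.ext
    funext c
    simp [fwd]
  map_smul' r φ := by
    apply Subtype.ext
    funext c
    simp [fwd]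
  invFun := bwd
  left_inv φ := by
    apply Subtype.ext
    apply LinearMap.ext
    intro v
    funext b
    show (∑ a, v a * (fwd φ).1 (glue a b)) = φ.1 v b
    have h : ∀ a : Fin m → Fin n, (fwd φ).1 (glue a b) = φ.1 (delta a) b := by
      intro a
      show φ.1 (delta (split₁ (glue a b))) (split₂ (glue a b)) = _
      rw [split₁_glue, split₂_glue]
    simp only [h]
    conv_rhs => rw [← sum_delta v]
    rw [map_sum]
    simp [Finset.sum_apply]
  right_inv f := by
    apply Subtype.ext
    funext c
    show (∑ a, delta (split₁ c) a * f.1 (glue a (split₂ c))) = f.1 c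
    simp only [delta, ite_mul, one_mul, zero_mul]
    rw [Finset.sum_ite_eq' Finset.univ (split₁ c)
      (fun a => f.1 (glue a (split₂ c)))]
    simp [glue_split]

end EqAux

/-- Permutation equivariant linear layers `(ℝ^n)^{⊗ m} → (ℝ^n)^{⊗ m'}` are linearly
isomorphic to the `Σ_n`-invariant subspace of `(ℝ^n)^{⊗ (m + m')}`. -/
theorem equivariantMaps_linearEquiv_invariants (n m m' : ℕ) :
    Nonempty ((equivariantMaps n m m') ≃ₗ[ℝ] (invariantFunctions n (m + m'))) :=
  ⟨EqAux.mainEquiv⟩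
end

section
/- Let n, m, m', p, p' be natural numbers with m + m' = p + p'. Then the dimension of the space of Σ_n-equivariant linear maps from ((Fin m → Fin n) → ℝ) to ((Fin m' → Fin n) → ℝ) equals the dimension of the space of Σ_n-equivariant linear maps from ((Fin p → Fin n) → ℝ) to ((Fin p' → Fin n) → ℝ). -/
/-- Σ_n-invariant functions on `l`-tuples. -/
noncomputable def invFunctions (n l : ℕ) : Submodule ℝ ((Fin l → Fin n) → ℝ) where
  carrier := {g | ∀ (σ : Equiv.Perm (Fin n)) (x : Fin l → Fin n), g (⇑σ ∘ x) = g x}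
  add_mem' := by
    intro f g hf hg σ x
    simp only [Pi.add_apply, hf σ x, hg σ x]
  zero_mem' := by intro σ x; rfl
  smul_mem' := by
    intro c f hf σ x
    simp only [Pi.smul_apply, hf σ x]

lemma toMatrix'_single {n m m' : ℕ}
    (φ : ((Fin m → Fin n) → ℝ) →ₗ[ℝ] ((Fin m' → Fin n) → ℝ))
    (j : Fin m' → Fin n) (i : Fin m → Fin n) :
    LinearMap.toMatrix' φ j i = φ (Pi.single i 1) j := by
  rw [LinearMap.toMatrix'_apply]

lemma single_comp {n m : ℕ} (σ : Equiv.Perm (Fin n)) (x : Fin m → Fin n) :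
    (fun i : Fin m → Fin n => (Pi.single x (1:ℝ) : (Fin m → Fin n) → ℝ) (⇑σ⁻¹ ∘ i)) = Pi.single (⇑σ ∘ x) (1:ℝ) := by
  funext i
  simp only [Pi.single_apply]
  congr 1
  simp only [eq_iff_iff]
  constructor
  · intro h
    funext k
    have := congrFun h k
    simp only [Function.comp_apply] at this
    show i k = σ (x k)
    rw [← this]
    simp
  · intro h
    subst h
    funext k
    simp

lemma mem_equivariantMaps_iff {n m m' : ℕ}
    (φ : ((Fin m → Fin n) → ℝ) →ₗ[ℝ] ((Fin m' → Fin n) → ℝ)) :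
    φ ∈ equivariantMaps n m m' ↔
      ∀ (σ : Equiv.Perm (Fin n)) (j : Fin m' → Fin n) (i : Fin m → Fin n),
        LinearMap.toMatrix' φ (⇑σ ∘ j) (⇑σ ∘ i) = LinearMap.toMatrix' φ j i := by
  constructor
  · intro hφ σ j i
    rw [toMatrix'_single, toMatrix'_single]
    have h := hφ σ (Pi.single i 1)
    rw [single_comp σ i] at h
    have h2 := congrFun h (⇑σ ∘ j)
    rw [h2]
    have hj : ⇑σ⁻¹ ∘ ⇑σ ∘ j = j := by funext k; simp
    rw [hj]
  · intro hM σ v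
    funext j
    have hcomp : ∀ {l : ℕ} (x : Fin l → Fin n), ⇑σ ∘ (⇑σ⁻¹ ∘ x) = x := by
      intro l x; funext k; simp
    have hcomp' : ∀ {l : ℕ} (x : Fin l → Fin n), ⇑σ⁻¹ ∘ (⇑σ ∘ x) = x := by
      intro l x; funext k; simp
    have hv : (fun i : Fin m → Fin n => v (⇑σ⁻¹ ∘ i))
        = ∑ x : Fin m → Fin n, v x • (Pi.single (⇑σ ∘ x) (1:ℝ) : (Fin m → Fin n) → ℝ) := by
      funext y
      rw [Finset.sum_apply]
      have hiff : ∀ x : Fin m → Fin n, (y = ⇑σ ∘ x) ↔ (x = ⇑σ⁻¹ ∘ y) := by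
        intro x
        constructor
        · intro hh; rw [hh, hcomp']
        · intro hh; rw [hh, hcomp]
      simp only [Pi.smul_apply, Pi.single_apply, smul_eq_mul, mul_ite, mul_one, mul_zero, hiff]
      simp
    have hv' : v = ∑ x : Fin m → Fin n, v x • (Pi.single x (1:ℝ) : (Fin m → Fin n) → ℝ) := by
      funext y
      rw [Finset.sum_apply]
      simp [Pi.single_apply]
    rw [hv, map_sum]
    conv_rhs => rw [hv', map_sum]
    rw [Finset.sum_apply, Finset.sum_apply]
    refine Finset.sum_congr rfl fun x _ => ?_
    simp only [map_smul, Pi.smul_apply, smul_eq_mul]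
    congr 1
    have := hM σ (⇑σ⁻¹ ∘ j) x
    rw [toMatrix'_single, toMatrix'_single, hcomp] at this
    exact this

lemma finrank_equivariantMaps_eq_inv (n m m' : ℕ) :
    Module.finrank ℝ (equivariantMaps n m m') = Module.finrank ℝ (invFunctions n (m + m')) := by
  classical
  let e0 : Fin (m + m') ≃ (Fin m' ⊕ Fin m) :=
    (finCongr (add_comm m m')).trans finSumFinEquiv.symm
  let eI : (Fin (m + m') → Fin n) ≃ ((Fin m' → Fin n) × (Fin m → Fin n)) :=
    (Equiv.arrowCongr e0 (Equiv.refl (Fin n))).trans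
      (Equiv.sumArrowEquivProdArrow _ _ _)
  have heI : ∀ (σ : Equiv.Perm (Fin n)) (y : Fin (m + m') → Fin n),
      eI (⇑σ ∘ y) = (⇑σ ∘ (eI y).1, ⇑σ ∘ (eI y).2) := by
    intro σ y
    rfl
  let E : (((Fin m → Fin n) → ℝ) →ₗ[ℝ] ((Fin m' → Fin n) → ℝ)) ≃ₗ[ℝ]
      ((Fin (m + m') → Fin n) → ℝ) :=
    LinearMap.toMatrix'.trans
      ((LinearEquiv.curry ℝ ℝ ((Fin m' → Fin n)) ((Fin m → Fin n))).symm.trans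
        (LinearEquiv.funCongrLeft ℝ ℝ eI))
  have hE : ∀ (φ : ((Fin m → Fin n) → ℝ) →ₗ[ℝ] ((Fin m' → Fin n) → ℝ))
      (y : Fin (m + m') → Fin n),
      E φ y = LinearMap.toMatrix' φ (eI y).1 (eI y).2 := fun _ _ => rfl
  have hmap : (equivariantMaps n m m').map E.toLinearMap = invFunctions n (m + m') := by
    ext g
    simp only [Submodule.mem_map]
    constructor
    · rintro ⟨φ, hφ, rfl⟩
      rw [mem_equivariantMaps_iff] at hφ
      intro σ y
      have h1 : E.toLinearMap φ (⇑σ ∘ y) = LinearMap.toMatrix' φ (eI (⇑σ ∘ y)).1 (eI (⇑σ ∘ y)).2 :=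
        hE φ (⇑σ ∘ y)
      have h2 : E.toLinearMap φ y = LinearMap.toMatrix' φ (eI y).1 (eI y).2 := hE φ y
      rw [h1, h2, heI]
      exact hφ σ (eI y).1 (eI y).2
    · intro hg
      refine ⟨E.symm g, ?_, E.apply_symm_apply g⟩
      rw [mem_equivariantMaps_iff]
      intro σ j i
      have hgy : ∀ y : Fin (m + m') → Fin n,
          LinearMap.toMatrix' (E.symm g) (eI y).1 (eI y).2 = g y := by
        intro y
        rw [← hE (E.symm g) y, E.apply_symm_apply]
      have h1 := hgy (eI.symm (j, i))
      rw [Equiv.apply_symm_apply] at h1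
      have h2 := hgy (⇑σ ∘ eI.symm (j, i))
      rw [heI, Equiv.apply_symm_apply] at h2
      rw [h2, h1]
      exact hg σ (eI.symm (j, i))
  calc Module.finrank ℝ (equivariantMaps n m m')
      = Module.finrank ℝ ((equivariantMaps n m m').map E.toLinearMap) :=
        (LinearEquiv.finrank_map_eq E _).symm
    _ = Module.finrank ℝ (invFunctions n (m + m')) := by rw [hmap]

/-- The dimension of the space of `Σ_n`-equivariant linear maps
`(ℝ^n)^{⊗ m} → (ℝ^n)^{⊗ m'}` depends only on the sum `m + m'`. -/
theorem finrank_equivariantMaps_eq_of_sum_eq (n m m' p p' : ℕ) (h : m + m' = p + p') :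
    Module.finrank ℝ (equivariantMaps n m m') = Module.finrank ℝ (equivariantMaps n p p') := by
  rw [finrank_equivariantMaps_eq_inv, finrank_equivariantMaps_eq_inv, h]
end

section
/- Let n, l be natural numbers. The dimension of the Σ_n-invariant subspace of the space of functions (Fin l → Fin n) → ℝ equals the number of set partitions of Fin l into at most n nonempty blocks. -/
/-- The orbit setoid on tuples. -/
def orbitSetoid (n l : ℕ) : Setoid (Fin l → Fin n) where
  r i j := ∃ σ : Equiv.Perm (Fin n), σ ∘ i = j
  iseqv := by
    refine ⟨fun i => ⟨1, rfl⟩, ?_, ?_⟩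
    · rintro i j ⟨σ, rfl⟩
      exact ⟨σ⁻¹, by ext x; simp⟩
    · rintro i j k ⟨σ, rfl⟩ ⟨τ, rfl⟩
      exact ⟨τ * σ, by ext x; simp⟩

lemma exists_perm_of_ker_eq {n l : ℕ} {i j : Fin l → Fin n}
    (hk : Setoid.ker i = Setoid.ker j) : ∃ σ : Equiv.Perm (Fin n), σ ∘ i = j := by
  classical
  have key : ∀ a b : Fin l, i a = i b ↔ j a = j b := by
    intro a b
    rw [← Setoid.ker_def (f := i), ← Setoid.ker_def (f := j), hk]
  let F : {a // a ∈ Set.range i} → {a // a ∈ Set.range j} :=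
    fun a => ⟨j (Classical.choose a.2), Set.mem_range_self _⟩
  have hF : ∀ x : Fin l, (F ⟨i x, Set.mem_range_self x⟩ : Fin n) = j x := by
    intro x
    exact (key _ _).mp (Classical.choose_spec (⟨x, rfl⟩ : ∃ y, i y = i x))
  have hbij : Function.Bijective F := by
    constructor
    · rintro ⟨a, ha⟩ ⟨b, hb⟩ h
      have h1 : i (Classical.choose ha) = a := Classical.choose_spec ha
      have h2 : i (Classical.choose hb) = b := Classical.choose_spec hb
      have : j (Classical.choose ha) = j (Classical.choose hb) := congrArg Subtype.val h
      have := (key _ _).mpr this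
      exact Subtype.ext (h1.symm.trans (this.trans h2))
    · rintro ⟨b, hb⟩
      obtain ⟨y, rfl⟩ := hb
      exact ⟨⟨i y, Set.mem_range_self y⟩, Subtype.ext (hF y)⟩
  let e := Equiv.ofBijective F hbij
  refine ⟨e.extendSubtype, funext fun x => ?_⟩
  have := Equiv.extendSubtype_apply_of_mem e (i x) (Set.mem_range_self x)
  simp only [Function.comp_apply, this]
  exact hF x

/-- The invariant functions are linearly equivalent to functions on orbits. -/
noncomputable def invariantEquiv (n l : ℕ) :
    invariantFunctions n l ≃ₗ[ℝ] (Quotient (orbitSetoid n l) → ℝ) where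
  toFun f := Quotient.lift (f : (Fin l → Fin n) → ℝ)
    (by rintro a b ⟨σ, rfl⟩; exact (f.2 σ a).symm)
  map_add' f g := by
    funext q
    induction q using Quotient.ind
    rfl
  map_smul' c f := by
    funext q
    induction q using Quotient.ind
    rfl
  invFun g := ⟨fun x => g (Quotient.mk _ x), fun σ x =>
    congrArg g (Quotient.sound ⟨σ⁻¹, by ext y; simp⟩)⟩
  left_inv f := by
    apply Subtype.ext
    funext x
    rfl
  right_inv g := by
    funext q
    induction q using Quotient.ind
    rfl

/-- Orbits correspond to setoids on `Fin l` with at most `n` classes. -/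
noncomputable def orbitEquivSetoids (n l : ℕ) :
    Quotient (orbitSetoid n l) ≃ {s : Setoid (Fin l) // Nat.card (Quotient s) ≤ n} := by
  classical
  have bound : ∀ i : Fin l → Fin n, Nat.card (Quotient (Setoid.ker i)) ≤ n := by
    intro i
    rw [Nat.card_congr (Setoid.quotientKerEquivRange i)]
    calc Nat.card (Set.range i) ≤ Nat.card (Fin n) :=
          Nat.card_le_card_of_injective _ Subtype.coe_injective
      _ = n := by simp
  refine Equiv.ofBijective
    (Quotient.lift (fun i => (⟨Setoid.ker i, bound i⟩ :
        {s : Setoid (Fin l) // Nat.card (Quotient s) ≤ n})) ?_) ⟨?_, ?_⟩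
  · rintro a b ⟨σ, rfl⟩
    refine Subtype.ext (Setoid.ext fun x y => ?_)
    simp only [Setoid.ker_def, Function.comp_apply]
    exact ⟨fun h => by rw [h], fun h => σ.injective h⟩
  · intro q1 q2 h
    induction q1 using Quotient.ind
    induction q2 using Quotient.ind
    exact Quotient.sound (exists_perm_of_ker_eq (congrArg Subtype.val h))
  · rintro ⟨s, hs⟩
    have : Fintype (Quotient s) := Fintype.ofFinite _
    have hcard : Fintype.card (Quotient s) ≤ Fintype.card (Fin n) := by
      rwa [← Nat.card_eq_fintype_card, Fintype.card_fin]
    obtain ⟨φ⟩ := Function.Embedding.nonempty_of_card_le hcard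
    refine ⟨Quotient.mk _ (fun x => φ (Quotient.mk s x)), Subtype.ext (Setoid.ext fun a b => ?_)⟩
    change φ (Quotient.mk s a) = φ (Quotient.mk s b) ↔ s a b
    rw [φ.injective.eq_iff, Quotient.eq]

/-- Setoids with at most `n` classes correspond to partitions with at most `n` blocks. -/
noncomputable def setoidsEquivPartitions (n l : ℕ) :
    {s : Setoid (Fin l) // Nat.card (Quotient s) ≤ n} ≃
      {P : Set (Set (Fin l)) // Setoid.IsPartition P ∧ P.ncard ≤ n} where
  toFun s := ⟨s.1.classes, Setoid.isPartition_classes s.1, by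
    have := s.2
    rwa [Nat.card_congr (Setoid.quotientEquivClasses s.1), Nat.card_coe_set_eq] at this⟩
  invFun P := ⟨Setoid.mkClasses P.1 P.2.1.2, by
    rw [Nat.card_congr (Setoid.quotientEquivClasses _), Setoid.classes_mkClasses P.1 P.2.1,
      Nat.card_coe_set_eq]
    exact P.2.2⟩
  left_inv s := Subtype.ext (Setoid.mkClasses_classes s.1)
  right_inv P := Subtype.ext (Setoid.classes_mkClasses P.1 P.2.1)

/-- The dimension of the `Σ_n`-invariant subspace of `(ℝ^n)^{⊗ l}` equals the number of
set partitions of `Fin l` into at most `n` nonempty blocks. -/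
theorem finrank_invariants_eq_card_partitions (n l : ℕ) :
    Module.finrank ℝ (invariantFunctions n l) =
      Nat.card {P : Set (Set (Fin l)) // Setoid.IsPartition P ∧ P.ncard ≤ n} := by
  classical
  have : Fintype (Quotient (orbitSetoid n l)) := Fintype.ofFinite _
  rw [(invariantEquiv n l).finrank_eq, Module.finrank_fintype_fun_eq_card,
    ← Nat.card_eq_fintype_card, Nat.card_congr ((orbitEquivSetoids n l).trans
      (setoidsEquivPartitions n l))]
end
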